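/- The maximal additive lifetime ℓ⁺_max for a 1-cycle formed by three points in ℝ^2 with circumradius at most 1 (Čech filtration) equals 1 − √3/2, and it is attained by an equilateral triangle inscribed in the unit circle (side length √3). -/

import Mathlib

open Real EuclideanGeometry

private lemma key_abstract (N p q r : ℝ)
    (hid : N^3 + 2*p*q*r = N*(p^2+q^2+r^2))
    (hA : p + q < r + N) (hB : p + r < q + N) (hC : q + r < p + N)
    (hp : -N/2 < p) (hq : -N/2 < q) (hr : -N/2 < r) : False := by
  nlinarith [mul_pos (by linarith : (0:ℝ) < r + N - p - q) (by linarith : (0:ℝ) < q + N - p - r),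
    mul_pos (by linarith : (0:ℝ) < r + N - p - q) (by linarith : (0:ℝ) < p + N - q - r),
    mul_pos (by linarith : (0:ℝ) < q + N - p - r) (by linarith : (0:ℝ) < p + N - q - r),
    mul_pos (by linarith : (0:ℝ) < 2*p + N) (by linarith : (0:ℝ) < 2*q + N),
    mul_pos (by linarith : (0:ℝ) < 2*p + N) (by linarith : (0:ℝ) < 2*r + N),
    mul_pos (by linarith : (0:ℝ) < 2*q + N) (by linarith : (0:ℝ) < 2*r + N),
    mul_pos (mul_pos (by linarith : (0:ℝ) < 2*p + N) (by linarith : (0:ℝ) < 2*q + N))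
      (by linarith : (0:ℝ) < 2*r + N),
    sq_nonneg (p-q), sq_nonneg (p-r), sq_nonneg (q-r), sq_nonneg (p+q+r)]

private lemma coords (a1 b1 a2 b2 a3 b3 c0 c1 R : ℝ)
    (hn1 : (a1-c0)^2+(b1-c1)^2 = R^2)
    (hn2 : (a2-c0)^2+(b2-c1)^2 = R^2)
    (hn3 : (a3-c0)^2+(b3-c1)^2 = R^2)
    (iA : 0 < (a2-a1)*(a3-a1)+(b2-b1)*(b3-b1))
    (iB : 0 < (a1-a2)*(a3-a2)+(b1-b2)*(b3-b2))
    (iC : 0 < (a1-a3)*(a2-a3)+(b1-b3)*(b2-b3))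
    (s12 : (a1-a2)^2+(b1-b2)^2 < 3*R^2)
    (s13 : (a1-a3)^2+(b1-b3)^2 < 3*R^2)
    (s23 : (a2-a3)^2+(b2-b3)^2 < 3*R^2) : False := by
  have det0 : ((a1-c0)^2+(b1-c1)^2) * ((a2-c0)^2+(b2-c1)^2) * ((a3-c0)^2+(b3-c1)^2)
      + 2 * ((a1-c0)*(a2-c0)+(b1-c1)*(b2-c1)) * ((a1-c0)*(a3-c0)+(b1-c1)*(b3-c1))
          * ((a2-c0)*(a3-c0)+(b2-c1)*(b3-c1))
      = ((a1-c0)^2+(b1-c1)^2) * ((a2-c0)*(a3-c0)+(b2-c1)*(b3-c1))^2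
      + ((a2-c0)^2+(b2-c1)^2) * ((a1-c0)*(a3-c0)+(b1-c1)*(b3-c1))^2
      + ((a3-c0)^2+(b3-c1)^2) * ((a1-c0)*(a2-c0)+(b1-c1)*(b2-c1))^2 := by ring
  rw [hn1, hn2, hn3] at det0
  exact key_abstract (R^2)
    ((a1-c0)*(a2-c0)+(b1-c1)*(b2-c1))
    ((a1-c0)*(a3-c0)+(b1-c1)*(b3-c1))
    ((a2-c0)*(a3-c0)+(b2-c1)*(b3-c1))
    (by linear_combination det0)
    (by linarith [iA, hn1]) (by linarith [iB, hn2]) (by linarith [iC, hn3])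
    (by linarith [s12, hn1, hn2]) (by linarith [s13, hn1, hn3])
    (by linarith [s23, hn2, hn3])

private lemma inner_pos_of_angle_lt {V : Type*} [NormedAddCommGroup V]
    [InnerProductSpace ℝ V] {x y : V}
    (h : InnerProductGeometry.angle x y < π/2) : 0 < (inner ℝ x y : ℝ) := by
  rw [InnerProductGeometry.angle, Real.arccos_lt_pi_div_two] at h
  by_contra hle
  push_neg at hle
  have h2 : (inner ℝ x y : ℝ) / (‖x‖ * ‖y‖) ≤ 0 :=
    div_nonpos_of_nonpos_of_nonneg hle (by positivity)
  linarith

private lemma dsq (y z : EuclideanSpace ℝ (Fin 2)) :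
    dist y z ^ 2 = (y 0 - z 0)^2 + (y 1 - z 1)^2 := by
  rw [EuclideanSpace.dist_eq, Real.sq_sqrt (by positivity)]
  simp [Real.dist_eq, Fin.sum_univ_two, sq_abs]

private lemma dist_of_sq {y z : EuclideanSpace ℝ (Fin 2)} {t : ℝ} (ht : 0 ≤ t)
    (h : (y 0 - z 0)^2 + (y 1 - z 1)^2 = t^2) : dist y z = t := by
  have h1 : dist y z ^ 2 = t ^ 2 := by rw [dsq, h]
  nlinarith [dist_nonneg (x := y) (y := z), ht]

theorem stmt_5 :
    -- upper bound: every acute triangle with circumradius R ≤ 1 has additive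
    -- lifetime R - L/2 ≤ 1 - √3/2, where L is the longest side
    (∀ (x₁ x₂ x₃ c : EuclideanSpace ℝ (Fin 2)) (R : ℝ),
      dist c x₁ = R → dist c x₂ = R → dist c x₃ = R → R ≤ 1 →
      ∠ x₂ x₁ x₃ < π / 2 → ∠ x₁ x₂ x₃ < π / 2 → ∠ x₁ x₃ x₂ < π / 2 →
      R - max (max (dist x₁ x₂) (dist x₁ x₃)) (dist x₂ x₃) / 2
        ≤ 1 - Real.sqrt 3 / 2) ∧
    -- attained by an equilateral triangle of side √3 inscribed in the unit circle
    (∃ (x₁ x₂ x₃ c : EuclideanSpace ℝ (Fin 2)),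
      dist c x₁ = 1 ∧ dist c x₂ = 1 ∧ dist c x₃ = 1 ∧
      dist x₁ x₂ = Real.sqrt 3 ∧ dist x₁ x₃ = Real.sqrt 3 ∧ dist x₂ x₃ = Real.sqrt 3 ∧
      1 - max (max (dist x₁ x₂) (dist x₁ x₃)) (dist x₂ x₃) / 2
        = 1 - Real.sqrt 3 / 2) := by
  have h3 : Real.sqrt 3 ^ 2 = 3 := Real.sq_sqrt (by norm_num)
  have h3nn : (0:ℝ) ≤ Real.sqrt 3 := Real.sqrt_nonneg 3
  have h3lt : Real.sqrt 3 < 2 := by nlinarith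
  constructor
  · intro x₁ x₂ x₃ c R h1 h2 h3' hR hA hB hC
    have hR0 : 0 ≤ R := h1 ▸ dist_nonneg
    have hn1 : (x₁ 0 - c 0)^2 + (x₁ 1 - c 1)^2 = R^2 := by
      rw [← dsq, dist_comm, h1]
    have hn2 : (x₂ 0 - c 0)^2 + (x₂ 1 - c 1)^2 = R^2 := by
      rw [← dsq, dist_comm, h2]
    have hn3 : (x₃ 0 - c 0)^2 + (x₃ 1 - c 1)^2 = R^2 := by
      rw [← dsq, dist_comm, h3']
    have iA : 0 < (x₂ 0 - x₁ 0)*(x₃ 0 - x₁ 0) + (x₂ 1 - x₁ 1)*(x₃ 1 - x₁ 1) := by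
      have h := inner_pos_of_angle_lt (x := x₂ -ᵥ x₁) (y := x₃ -ᵥ x₁) hA
      simp [PiLp.inner_apply, RCLike.inner_apply, Fin.sum_univ_two] at h; linarith
    have iB : 0 < (x₁ 0 - x₂ 0)*(x₃ 0 - x₂ 0) + (x₁ 1 - x₂ 1)*(x₃ 1 - x₂ 1) := by
      have h := inner_pos_of_angle_lt (x := x₁ -ᵥ x₂) (y := x₃ -ᵥ x₂) hB
      simp [PiLp.inner_apply, RCLike.inner_apply, Fin.sum_univ_two] at h; linarith
    have iC : 0 < (x₁ 0 - x₃ 0)*(x₂ 0 - x₃ 0) + (x₁ 1 - x₃ 1)*(x₂ 1 - x₃ 1) := by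
      have h := inner_pos_of_angle_lt (x := x₁ -ᵥ x₃) (y := x₂ -ᵥ x₃) hC
      simp [PiLp.inner_apply, RCLike.inner_apply, Fin.sum_univ_two] at h; linarith
    set L := max (max (dist x₁ x₂) (dist x₁ x₃)) (dist x₂ x₃) with hLdef
    have hL : Real.sqrt 3 * R ≤ L := by
      by_contra hcon
      push_neg at hcon
      have l12 : dist x₁ x₂ < Real.sqrt 3 * R :=
        lt_of_le_of_lt (le_trans (le_max_left _ _) (le_max_left _ _)) hcon
      have l13 : dist x₁ x₃ < Real.sqrt 3 * R :=
        lt_of_le_of_lt (le_trans (le_max_right _ _) (le_max_left _ _)) hcon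
      have l23 : dist x₂ x₃ < Real.sqrt 3 * R := lt_of_le_of_lt (le_max_right _ _) hcon
      have s12 : (x₁ 0 - x₂ 0)^2 + (x₁ 1 - x₂ 1)^2 < 3 * R^2 := by
        rw [← dsq]
        calc dist x₁ x₂ ^ 2 < (Real.sqrt 3 * R)^2 :=
              pow_lt_pow_left₀ l12 dist_nonneg two_ne_zero
          _ = 3 * R^2 := by rw [mul_pow, h3]
      have s13 : (x₁ 0 - x₃ 0)^2 + (x₁ 1 - x₃ 1)^2 < 3 * R^2 := by
        rw [← dsq]
        calc dist x₁ x₃ ^ 2 < (Real.sqrt 3 * R)^2 :=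
              pow_lt_pow_left₀ l13 dist_nonneg two_ne_zero
          _ = 3 * R^2 := by rw [mul_pow, h3]
      have s23 : (x₂ 0 - x₃ 0)^2 + (x₂ 1 - x₃ 1)^2 < 3 * R^2 := by
        rw [← dsq]
        calc dist x₂ x₃ ^ 2 < (Real.sqrt 3 * R)^2 :=
              pow_lt_pow_left₀ l23 dist_nonneg two_ne_zero
          _ = 3 * R^2 := by rw [mul_pow, h3]
      exact coords (x₁ 0) (x₁ 1) (x₂ 0) (x₂ 1) (x₃ 0) (x₃ 1) (c 0) (c 1) R
        hn1 hn2 hn3 iA iB iC s12 s13 s23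
    nlinarith [mul_nonneg (sub_nonneg.2 hR) (by nlinarith : (0:ℝ) ≤ 1 - Real.sqrt 3 / 2)]
  · refine ⟨(WithLp.equiv 2 _).symm ![1, 0],
      (WithLp.equiv 2 _).symm ![-(1/2), Real.sqrt 3 / 2],
      (WithLp.equiv 2 _).symm ![-(1/2), -(Real.sqrt 3 / 2)], 0,
      dist_of_sq zero_le_one (by norm_num [WithLp.equiv_symm_apply, PiLp.toLp_apply]),
      dist_of_sq zero_le_one (by norm_num [WithLp.equiv_symm_apply, PiLp.toLp_apply]; try nlinarith),
      dist_of_sq zero_le_one (by norm_num [WithLp.equiv_symm_apply, PiLp.toLp_apply]; try nlinarith),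
      dist_of_sq h3nn (by norm_num [WithLp.equiv_symm_apply, PiLp.toLp_apply]; try nlinarith),
      dist_of_sq h3nn (by norm_num [WithLp.equiv_symm_apply, PiLp.toLp_apply]; try nlinarith),
      dist_of_sq h3nn (by norm_num [WithLp.equiv_symm_apply, PiLp.toLp_apply]; try nlinarith), ?_⟩
    rw [dist_of_sq h3nn (by norm_num [WithLp.equiv_symm_apply, PiLp.toLp_apply]; try nlinarith),
      dist_of_sq h3nn (by norm_num [WithLp.equiv_symm_apply, PiLp.toLp_apply]; try nlinarith),
      dist_of_sq h3nn (by norm_num [WithLp.equiv_symm_apply, PiLp.toLp_apply]; try nlinarith)]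
    simp
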